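/- The group of rational points of the elliptic curve y² = x³ − 25x is infinite; in particular (−4, 6) is a point of infinite order. -/

import Mathlib

/-- The congruent number curve `E₅ : y ^ 2 = x ^ 3 - 25 * x` over `ℚ`. -/
def congruentCurveFive : WeierstrassCurve ℚ := ⟨0, 0, 0, -25, 0⟩

open WeierstrassCurve WeierstrassCurve.Affine

private abbrev W₅ : WeierstrassCurve.Affine ℚ := congruentCurveFive.toAffine

private lemma val_odd {a : ℤ} (h : ¬ (2:ℤ) ∣ a) : padicValRat 2 (a:ℚ) = 0 := by
  rw [padicValRat.of_int, padicValInt.eq_zero_of_not_dvd (by exact_mod_cast h)]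
  norm_num

private lemma negY_eq (x y : ℚ) : W₅.negY x y = -y := by
  simp [WeierstrassCurve.Affine.negY, congruentCurveFive]

private lemma equation_eq {x y : ℚ} (h : W₅.Equation x y) : y ^ 2 = x ^ 3 - 25 * x := by
  rw [WeierstrassCurve.Affine.equation_iff] at h
  simp only [congruentCurveFive] at h
  norm_num at h
  linarith [h]

private lemma step {x y : ℚ} (h : W₅.Nonsingular x y) {k : ℤ} (hk : 1 ≤ k)
    (hx : x ≠ 0) (hv : padicValRat 2 x = -(2 * k)) :
    ∃ (x' y' : ℚ) (h' : W₅.Nonsingular x' y'),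
      (Point.some _ _ h) + (Point.some _ _ h) = Point.some _ _ h' ∧ x' ≠ 0 ∧
        padicValRat 2 x' = -(2 * (k + 1)) := by
  have heq : y ^ 2 = x ^ 3 - 25 * x := equation_eq h.1
  have v25 : padicValRat 2 ((25:ℤ):ℚ) = 0 := val_odd (by decide)
  have v3 : padicValRat 2 ((3:ℤ):ℚ) = 0 := val_odd (by decide)
  have v2 : padicValRat 2 (2:ℚ) = 1 := by
    simpa using padicValRat.self (p := 2) one_lt_two
  push_cast at v25 v3
  have hx3 : x ^ 3 ≠ 0 := pow_ne_zero 3 hx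
  have hvx3 : padicValRat 2 (x ^ 3) = -(6 * k) := by
    rw [padicValRat.pow x, hv]; push_cast; ring
  have h25x : -(25 * x) ≠ 0 := by simpa using hx
  have hv25x : padicValRat 2 (-(25 * x)) = -(2 * k) := by
    rw [padicValRat.neg, padicValRat.mul (by norm_num) hx, v25, hv]; ring
  have hlt : padicValRat 2 (x ^ 3) < padicValRat 2 (-(25 * x)) := by
    rw [hvx3, hv25x]; linarith
  have hsum : x ^ 3 + -(25 * x) ≠ 0 := by
    intro h0
    have hxx : x ^ 3 = 25 * x := by linarith [h0]
    have e1 : padicValRat 2 (25 * x) = -(2 * k) := by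
      have := hv25x; rwa [padicValRat.neg] at this
    rw [hxx, e1] at hvx3
    omega
  have hvy2 : padicValRat 2 (y ^ 2) = -(6 * k) := by
    rw [heq, sub_eq_add_neg, padicValRat.add_eq_of_lt hsum hx3 h25x hlt, hvx3]
  have hy : y ≠ 0 := by
    intro h0
    apply hsum
    rw [h0] at heq
    norm_num at heq
    linarith [heq]
  have hvy : padicValRat 2 y = -(3 * k) := by
    have := padicValRat.pow (p := 2) y (k := 2)
    rw [hvy2] at this; push_cast at this; linarith
  have hynegY : y ≠ W₅.negY x y := by
    rw [negY_eq]; intro h0; apply hy; linarith [h0]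
  -- the slope
  have hslope : W₅.slope x x y y = (3 * x ^ 2 - 25) / (2 * y) := by
    rw [WeierstrassCurve.Affine.slope_of_Y_ne rfl hynegY, negY_eq]
    simp only [congruentCurveFive]
    norm_num
    ring_nf
  -- numerator
  have hx2 : (3 : ℚ) * x ^ 2 ≠ 0 := by positivity
  have hvx2 : padicValRat 2 (3 * x ^ 2) = -(4 * k) := by
    rw [padicValRat.mul (by norm_num) (pow_ne_zero 2 hx), v3, padicValRat.pow x, hv]
    push_cast; ring
  have hv25' : padicValRat 2 (-25 : ℚ) = 0 := by
    rw [show ((-25:ℚ)) = -((25:ℚ)) by ring, padicValRat.neg, v25]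
  have hnumne : 3 * x ^ 2 + (-25 : ℚ) ≠ 0 := by
    intro h0
    have : (3:ℚ) * x ^ 2 = 25 := by linarith [h0]
    rw [this, v25] at hvx2
    omega
  have hvnum : padicValRat 2 (3 * x ^ 2 - 25) = -(4 * k) := by
    rw [sub_eq_add_neg, padicValRat.add_eq_of_lt hnumne hx2 (by norm_num) (by rw [hvx2, hv25']; linarith), hvx2]
  have hnumne' : 3 * x ^ 2 - (25:ℚ) ≠ 0 := by rw [sub_eq_add_neg]; exact hnumne
  -- denominator
  have hden : (2:ℚ) * y ≠ 0 := by simpa using hy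
  have hvden : padicValRat 2 (2 * y) = 1 - 3 * k := by
    rw [padicValRat.mul (by norm_num) hy, v2, hvy]; ring
  have hL : W₅.slope x x y y ≠ 0 := by
    rw [hslope]; exact div_ne_zero hnumne' hden
  have hvL : padicValRat 2 (W₅.slope x x y y) = -(k + 1) := by
    rw [hslope, padicValRat.div hnumne' hden, hvnum, hvden]; ring
  -- addX
  have haddX : W₅.addX x x (W₅.slope x x y y) = (W₅.slope x x y y) ^ 2 + -(2 * x) := by
    simp only [WeierstrassCurve.Affine.addX, congruentCurveFive]
    norm_num; ring
  have hL2 : (W₅.slope x x y y) ^ 2 ≠ 0 := pow_ne_zero 2 hL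
  have hvL2 : padicValRat 2 ((W₅.slope x x y y) ^ 2) = -(2 * k + 2) := by
    rw [padicValRat.pow (W₅.slope x x y y), hvL]; push_cast; ring
  have h2x : -(2 * x) ≠ 0 := by simpa using hx
  have hv2x : padicValRat 2 (-(2 * x)) = 1 - 2 * k := by
    rw [padicValRat.neg, padicValRat.mul (by norm_num) hx, v2, hv]; ring
  have hltx : padicValRat 2 ((W₅.slope x x y y) ^ 2) < padicValRat 2 (-(2 * x)) := by
    rw [hvL2, hv2x]; linarith
  have hxne' : (W₅.slope x x y y) ^ 2 + -(2 * x) ≠ 0 := by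
    intro h0
    have : (W₅.slope x x y y) ^ 2 = 2 * x := by linarith [h0]
    have e2 : padicValRat 2 (2 * x) = 1 - 2 * k := by
      have := hv2x; rwa [padicValRat.neg] at this
    rw [this, e2] at hvL2
    omega
  have hvx' : padicValRat 2 (W₅.addX x x (W₅.slope x x y y)) = -(2 * (k + 1)) := by
    rw [haddX, padicValRat.add_eq_of_lt hxne' hL2 h2x hltx, hvL2]; ring
  exact ⟨_, _, nonsingular_add h h (fun hxy => hynegY hxy.right),
    WeierstrassCurve.Affine.Point.add_self_of_Y_ne hynegY,
    by rw [haddX]; exact hxne', hvx'⟩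

private lemma iter (hP : W₅.Nonsingular (-4) 6) (m : ℕ) :
    ∃ (x y : ℚ) (h : W₅.Nonsingular x y),
      (2 ^ m) • (Point.some _ _ hP + Point.some _ _ hP) = Point.some _ _ h ∧ x ≠ 0 ∧
        padicValRat 2 x = -(2 * ((m : ℤ) + 2)) := by
  induction m with
  | zero =>
      have h6 : (6:ℚ) ≠ W₅.negY (-4) 6 := by rw [negY_eq]; norm_num
      have hslope : W₅.slope (-4) (-4) 6 6 = 23 / 12 := by
        rw [WeierstrassCurve.Affine.slope_of_Y_ne rfl h6, negY_eq]
        simp only [congruentCurveFive]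
        norm_num
      have haddX : W₅.addX (-4) (-4) (W₅.slope (-4) (-4) 6 6) = 1681 / 144 := by
        rw [hslope]
        simp only [WeierstrassCurve.Affine.addX, congruentCurveFive]
        norm_num
      refine ⟨_, _, nonsingular_add hP hP (fun hxy => h6 hxy.right), by
        rw [pow_zero, one_smul, WeierstrassCurve.Affine.Point.add_self_of_Y_ne h6], ?_, ?_⟩
      · rw [haddX]; norm_num
      · rw [haddX]
        have h9 : (1681 / 144 : ℚ) = ((1681:ℤ):ℚ) / (((9:ℤ):ℚ) * (2:ℚ) ^ 4) := by norm_num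
        rw [h9, padicValRat.div (by norm_num) (by norm_num),
          padicValRat.mul (by norm_num) (by norm_num),
          padicValRat.pow _, val_odd (by decide), val_odd (by decide)]
        have v2 : padicValRat 2 (2:ℚ) = 1 := by
          simpa using padicValRat.self (p := 2) one_lt_two
        rw [v2]; norm_num
  | succ m ih =>
      obtain ⟨x, y, h, heq, hx, hv⟩ := ih
      obtain ⟨x', y', h', hadd, hx', hv'⟩ :=
        step h (k := (m:ℤ) + 2) (by omega) hx hv
      refine ⟨x', y', h', ?_, hx', by rw [hv']; push_cast; ring⟩
      rw [pow_succ, mul_nsmul, heq, two_nsmul, hadd]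

theorem congruent_curve_five_infinite_rank :
    Infinite congruentCurveFive.toAffine.Point ∧
      ∃ h : congruentCurveFive.toAffine.Nonsingular (-4) 6,
        ∀ n : ℕ, 0 < n → n • (WeierstrassCurve.Affine.Point.some _ _ h) ≠
          (0 : congruentCurveFive.toAffine.Point) := by
  have hP : W₅.Nonsingular (-4) 6 := by
    rw [WeierstrassCurve.Affine.nonsingular_iff, WeierstrassCurve.Affine.equation_iff]
    simp only [congruentCurveFive]
    norm_num
  set P₂ := Point.some _ _ hP + Point.some _ _ hP with hP₂def
  have key : ∀ m₁ m₂ : ℕ, (2 ^ m₁) • P₂ = (2 ^ m₂) • P₂ → m₁ = m₂ := by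
    intro m₁ m₂ hmm
    obtain ⟨x₁, y₁, h₁, he₁, -, hv₁⟩ := iter hP m₁
    obtain ⟨x₂, y₂, h₂, he₂, -, hv₂⟩ := iter hP m₂
    rw [he₁, he₂] at hmm
    injection hmm with hx hy
    rw [hx, hv₂] at hv₁
    omega
  constructor
  · exact Infinite.of_injective (fun m : ℕ => (2 ^ m) • P₂) (fun m₁ m₂ h => key _ _ h)
  · refine ⟨hP, ?_⟩
    intro n hn hcon
    have hnP₂ : n • P₂ = 0 := by
      rw [hP₂def, ← two_nsmul, ← mul_nsmul, mul_comm, mul_nsmul, hcon]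
      exact nsmul_zero _
    have reduce : ∀ m : ℕ, (2 ^ m) • P₂ = (2 ^ m % n) • P₂ := by
      intro m
      conv_lhs => rw [← Nat.mod_add_div (2 ^ m) n]
      rw [add_nsmul, mul_nsmul, hnP₂, nsmul_zero, add_zero]
    obtain ⟨m₁, m₂, hne, hfeq⟩ :=
      Finite.exists_ne_map_eq_of_infinite (fun m : ℕ => (⟨2 ^ m % n, Nat.mod_lt _ hn⟩ : Fin n))
    apply hne
    apply key
    rw [reduce m₁, reduce m₂]
    have : 2 ^ m₁ % n = 2 ^ m₂ % n := by simpa using congrArg Fin.val hfeq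
    rw [this]
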